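/- arXiv:0908.1016 — 3 statements merged into one kernel-verified Lean document; each statement's English description precedes it below -/
import Mathlib

section
/- Let d ≥ 2, let G be a rank-4 covariant tensor on ℝ^d with components G_{abcd} satisfying G_{abcd} = G_{cdab} = −G_{bacd}, and let t be a d×d real matrix with entries t^m_a. Define G'_{abcd} = t^m_a t^n_b t^p_c t^q_d G_{mnpq} (sum over repeated indices). Then det(Petrov(G')) = (det t)^(2d−2) · det(Petrov(G)). -/
open Finset

namespace PetrovAux

variable {d : ℕ}

/-- The second compound (exterior power) matrix of `t`, with rows and columns indexed by
ordered pairs. -/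
def lam2 (t : Matrix (Fin d) (Fin d) ℝ) :
    Matrix {p : Fin d × Fin d // p.1 < p.2} {p : Fin d × Fin d // p.1 < p.2} ℝ :=
  Matrix.of fun P Q =>
    t P.1.1 Q.1.1 * t P.1.2 Q.1.2 - t P.1.2 Q.1.1 * t P.1.1 Q.1.2

lemma sum_antisym (f : Fin d → Fin d → ℝ) (hf : ∀ m, f m m = 0) :
    ∑ m, ∑ n, f m n
      = ∑ P : {p : Fin d × Fin d // p.1 < p.2}, (f P.1.1 P.1.2 + f P.1.2 P.1.1) := by
  classical
  rw [← Finset.sum_product', Finset.univ_product_univ]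
  rw [← Finset.sum_filter_add_sum_filter_not Finset.univ (fun p : Fin d × Fin d => p.1 < p.2)
    (fun p => f p.1 p.2)]
  rw [← Finset.sum_filter_add_sum_filter_not
    (Finset.univ.filter (fun p : Fin d × Fin d => ¬ p.1 < p.2))
    (fun p : Fin d × Fin d => p.2 < p.1) (fun p => f p.1 p.2)]
  have h3 : ∑ p ∈ (Finset.univ.filter (fun p : Fin d × Fin d => ¬ p.1 < p.2)).filter
      (fun p : Fin d × Fin d => ¬ p.2 < p.1), f p.1 p.2 = 0 := by
    apply Finset.sum_eq_zero
    intro p hp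
    simp only [Finset.mem_filter] at hp
    have h : p.1 = p.2 := le_antisymm (not_lt.1 hp.2) (not_lt.1 hp.1.2)
    rw [h]; exact hf _
  have h2 : ∑ p ∈ (Finset.univ.filter (fun p : Fin d × Fin d => ¬ p.1 < p.2)).filter
      (fun p : Fin d × Fin d => p.2 < p.1), f p.1 p.2
      = ∑ P : {p : Fin d × Fin d // p.1 < p.2}, f P.1.2 P.1.1 := by
    rw [Finset.filter_filter]
    have e : ∑ p ∈ Finset.univ.filter (fun p : Fin d × Fin d => ¬ p.1 < p.2 ∧ p.2 < p.1),
        f p.1 p.2 = ∑ p ∈ Finset.univ.filter (fun p : Fin d × Fin d => p.1 < p.2), f p.2 p.1 := by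
      apply Finset.sum_nbij' (fun p => Prod.swap p) (fun p => Prod.swap p) <;>
        simp +contextual [not_lt_of_gt, le_of_lt]
    rw [e]
    exact Finset.sum_subtype _ (by simp) _
  have h1 : ∑ p ∈ Finset.univ.filter (fun p : Fin d × Fin d => p.1 < p.2), f p.1 p.2
      = ∑ P : {p : Fin d × Fin d // p.1 < p.2}, f P.1.1 P.1.2 :=
    Finset.sum_subtype _ (by simp) _
  rw [h1, h2, h3, add_zero, ← Finset.sum_add_distrib]

lemma prod_pairs (δ : Fin d → ℝ) :
    ∏ P : {p : Fin d × Fin d // p.1 < p.2}, (δ P.1.1 * δ P.1.2) = (∏ a, δ a) ^ (d - 1) := by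
  classical
  have h0 : ∏ p ∈ Finset.univ.filter (fun p : Fin d × Fin d => p.1 < p.2), (δ p.1 * δ p.2)
      = ∏ P : {p : Fin d × Fin d // p.1 < p.2}, (δ P.1.1 * δ P.1.2) :=
    Finset.prod_subtype _ (fun x => by simp) _
  rw [← h0, Finset.prod_filter, ← Finset.univ_product_univ, Finset.prod_product]
  have h1 : ∀ a : Fin d, ∏ b, (if a < b then δ a * δ b else 1)
      = (δ a) ^ (d - 1 - (a : ℕ)) * ∏ b, (if a < b then δ b else 1) := by
    intro a
    have hsplit : ∀ b : Fin d, (if a < b then δ a * δ b else 1)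
        = (if a < b then δ a else 1) * (if a < b then δ b else 1) := by
      intro b; split <;> simp
    rw [Finset.prod_congr rfl (fun b _ => hsplit b), Finset.prod_mul_distrib]
    congr 1
    rw [← Finset.prod_filter, Finset.prod_const]
    congr 1
    have h : Finset.univ.filter (fun b : Fin d => a < b) = Finset.Ioi a := by
      ext b; simp
    rw [h, Fin.card_Ioi]
  rw [Finset.prod_congr rfl (fun a _ => h1 a), Finset.prod_mul_distrib]
  have h2 : ∏ a : Fin d, ∏ b, (if a < b then δ b else 1) = ∏ b : Fin d, (δ b) ^ (b : ℕ) := by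
    rw [Finset.prod_comm]
    apply Finset.prod_congr rfl
    intro b _
    rw [← Finset.prod_filter, Finset.prod_const]
    congr 1
    have h : Finset.univ.filter (fun a : Fin d => a < b) = Finset.Iio b := by
      ext a; simp
    rw [h, Fin.card_Iio]
  rw [h2, ← Finset.prod_mul_distrib]
  have h3 : ∀ a : Fin d, δ a ^ (d - 1 - (a : ℕ)) * δ a ^ (a : ℕ) = δ a ^ (d - 1) := by
    intro a
    rw [← pow_add]
    congr 1
    have := a.isLt
    omega
  rw [Finset.prod_congr rfl (fun a _ => h3 a), Finset.prod_pow]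

lemma lam2_mul (A B : Matrix (Fin d) (Fin d) ℝ) : lam2 (A * B) = lam2 A * lam2 B := by
  ext P Q
  obtain ⟨⟨m, n⟩, hmn⟩ := P
  obtain ⟨⟨a, b⟩, hab⟩ := Q
  simp only [lam2, Matrix.mul_apply, Matrix.of_apply]
  have key : ∑ p, ∑ q, (A m p * A n q * (B p a * B q b) - A n p * A m q * (B p a * B q b))
      = ∑ P : {p : Fin d × Fin d // p.1 < p.2},
        ((A m P.1.1 * A n P.1.2 - A n P.1.1 * A m P.1.2) *
          (B P.1.1 a * B P.1.2 b - B P.1.2 a * B P.1.1 b)) := by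
    rw [sum_antisym (fun p q => A m p * A n q * (B p a * B q b) - A n p * A m q * (B p a * B q b))
      (fun p => by ring)]
    exact Finset.sum_congr rfl (fun P _ => by ring)
  calc (∑ p, A m p * B p a) * ∑ q, A n q * B q b -
        (∑ p, A n p * B p a) * ∑ q, A m q * B q b
      = ∑ p, ∑ q, (A m p * A n q * (B p a * B q b) - A n p * A m q * (B p a * B q b)) := by
        rw [Finset.sum_mul_sum, Finset.sum_mul_sum, ← Finset.sum_sub_distrib]
        exact Finset.sum_congr rfl fun p _ => by
          rw [← Finset.sum_sub_distrib]
          exact Finset.sum_congr rfl fun q _ => by ring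
    _ = _ := by rw [key]

lemma lam2_diagonal (δ : Fin d → ℝ) :
    lam2 (Matrix.diagonal δ) = Matrix.diagonal (fun P : {p : Fin d × Fin d // p.1 < p.2} =>
      δ P.1.1 * δ P.1.2) := by
  ext P Q
  obtain ⟨⟨m, n⟩, hmn⟩ := P
  obtain ⟨⟨a, b⟩, hab⟩ := Q
  simp only at hmn hab
  simp only [lam2, Matrix.of_apply, Matrix.diagonal_apply, Subtype.mk.injEq, Prod.mk.injEq]
  split_ifs
  all_goals (try (exfalso; omega))
  all_goals (subst_vars; ring)

set_option maxHeartbeats 1600000 in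
lemma det_lam2_transvection (i j : Fin d) (hij : i ≠ j) (c : ℝ) :
    (lam2 (Matrix.transvection i j c)).det = 1 := by
  classical
  set T := Matrix.transvection i j c with hT
  have hTapp : ∀ x y : Fin d, T x y
      = (if x = y then 1 else 0) + (if i = x ∧ j = y then c else 0) := by
    intro x y
    simp [hT, Matrix.transvection, Matrix.single, Matrix.one_apply]
  set p : {p : Fin d × Fin d // p.1 < p.2} → Prop := fun P => i = P.1.1 ∨ i = P.1.2 with hp
  -- diagonal entries are 1
  have hdiag : ∀ P : {p : Fin d × Fin d // p.1 < p.2}, lam2 T P P = 1 := by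
    rintro ⟨⟨m, n⟩, hmn⟩
    simp only at hmn
    simp only [lam2, Matrix.of_apply, hTapp]
    split_ifs
    all_goals (try (exfalso; omega))
    all_goals ring
  -- entries with a row not containing i are Kronecker deltas
  have hrow : ∀ P Q : {p : Fin d × Fin d // p.1 < p.2}, ¬ p P → P ≠ Q → lam2 T P Q = 0 := by
    rintro ⟨⟨m, n⟩, hmn⟩ ⟨⟨a, b⟩, hab⟩ hP hne
    simp only at hmn hab
    simp only [hp, not_or] at hP
    have hne' : ¬ (m = a ∧ n = b) := by
      intro h
      exact hne (by simp [h.1, h.2])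
    simp only [lam2, Matrix.of_apply, hTapp]
    split_ifs
    all_goals (try (exfalso; omega))
    all_goals ring
  -- entries with both rows and columns containing i vanish off the diagonal
  have hboth : ∀ P Q : {p : Fin d × Fin d // p.1 < p.2}, p P → p Q → P ≠ Q → lam2 T P Q = 0 := by
    rintro ⟨⟨m, n⟩, hmn⟩ ⟨⟨a, b⟩, hab⟩ hP hQ hne
    simp only at hmn hab
    simp only [hp] at hP hQ
    have hne' : ¬ (m = a ∧ n = b) := by
      intro h
      exact hne (by simp [h.1, h.2])
    simp only [lam2, Matrix.of_apply, hTapp]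
    split_ifs
    all_goals (try (exfalso; omega))
    all_goals ring
  rw [Matrix.twoBlockTriangular_det (lam2 T) p]
  · have e1 : (lam2 T).toSquareBlockProp p = 1 := by
      ext P Q
      by_cases h : P = Q
      · subst h
        simp [Matrix.toSquareBlockProp, hdiag]
      · have hne : (P : {p : Fin d × Fin d // p.1 < p.2}) ≠ Q := fun hc => h (Subtype.ext hc)
        simp [Matrix.toSquareBlockProp, Matrix.one_apply, h, hboth P.1 Q.1 P.2 Q.2 hne]
    have e2 : (lam2 T).toSquareBlockProp (fun P => ¬ p P) = 1 := by
      ext P Q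
      by_cases h : P = Q
      · subst h
        simp [Matrix.toSquareBlockProp, hdiag]
      · have hne : (P : {p : Fin d × Fin d // p.1 < p.2}) ≠ Q := fun hc => h (Subtype.ext hc)
        simp [Matrix.toSquareBlockProp, Matrix.one_apply, h, hrow P.1 Q.1 P.2 hne]
    rw [e1, e2, Matrix.det_one, Matrix.det_one, mul_one]
  · intro P hP Q hQ
    exact hrow P Q hP (by rintro rfl; exact hP hQ)

lemma det_lam2_zero (hd : 2 ≤ d) (t : Matrix (Fin d) (Fin d) ℝ) (ht : t.det = 0) :
    (lam2 t).det = 0 := by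
  classical
  obtain ⟨v, hv, hv0⟩ := (Matrix.exists_mulVec_eq_zero_iff).2 ht
  obtain ⟨a0, ha0⟩ := Function.ne_iff.1 hv
  have ha0' : v a0 ≠ 0 := by simpa using ha0
  set z : Fin d := ⟨0, by omega⟩ with hz
  set o : Fin d := ⟨1, by omega⟩ with ho
  set b0 : Fin d := if a0 = z then o else z with hb0def
  have hb0 : b0 ≠ a0 := by
    by_cases h : a0 = z
    · rw [hb0def, if_pos h, h, ho, hz]
      simp [Fin.ext_iff]
    · rw [hb0def, if_neg h]
      exact fun hc => h hc.symm
  set u : Fin d → ℝ := fun b => if b = b0 then 1 else 0 with hu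
  set w : {p : Fin d × Fin d // p.1 < p.2} → ℝ :=
    fun P => v P.1.1 * u P.1.2 - v P.1.2 * u P.1.1 with hw
  have htv : ∀ m, ∑ x, t m x * v x = 0 := by
    intro m
    have := congrFun hv0 m
    simpa [Matrix.mulVec, dotProduct] using this
  apply (Matrix.exists_mulVec_eq_zero_iff).1
  refine ⟨w, ?_, ?_⟩
  · -- w ≠ 0
    intro hzero
    rcases lt_trichotomy a0 b0 with h | h | h
    · have := congrFun hzero ⟨(a0, b0), h⟩
      simp [hw, hu, Ne.symm hb0] at this
      exact ha0' this
    · exact hb0 h.symm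
    · have := congrFun hzero ⟨(b0, a0), h⟩
      simp [hw, hu, Ne.symm hb0] at this
      exact ha0' this
  · -- lam2 t *ᵥ w = 0
    funext P
    obtain ⟨⟨m, n⟩, hmn⟩ := P
    simp only [Matrix.mulVec, dotProduct, Pi.zero_apply]
    have key : ∑ Q : {p : Fin d × Fin d // p.1 < p.2}, lam2 t ⟨(m, n), hmn⟩ Q * w Q
        = ∑ a, ∑ b, (t m a * t n b * (v a * u b) - t m a * t n b * (v b * u a)) := by
      rw [sum_antisym (fun a b => t m a * t n b * (v a * u b) - t m a * t n b * (v b * u a))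
        (fun a => by ring)]
      exact Finset.sum_congr rfl fun Q _ => by
        simp only [lam2, Matrix.of_apply, hw]
        ring
    rw [key]
    have expand : ∑ a, ∑ b, (t m a * t n b * (v a * u b) - t m a * t n b * (v b * u a))
        = (∑ a, t m a * v a) * (∑ b, t n b * u b) - (∑ a, t m a * u a) * (∑ b, t n b * v b) := by
      rw [Finset.sum_mul_sum, Finset.sum_mul_sum, ← Finset.sum_sub_distrib]
      exact Finset.sum_congr rfl fun a _ => by
        rw [← Finset.sum_sub_distrib]
        exact Finset.sum_congr rfl fun b _ => by ring
    rw [expand, htv m, htv n, zero_mul, mul_zero, sub_zero]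

lemma det_lam2 (hd : 2 ≤ d) (t : Matrix (Fin d) (Fin d) ℝ) :
    (lam2 t).det = t.det ^ (d - 1) := by
  by_cases ht : t.det = 0
  · rw [ht, zero_pow (by omega), det_lam2_zero hd t ht]
  · apply Matrix.diagonal_transvection_induction_of_det_ne_zero
      (fun M => (lam2 M).det = M.det ^ (d - 1)) t ht
    · intro D hD
      rw [lam2_diagonal, Matrix.det_diagonal, Matrix.det_diagonal, prod_pairs]
    · intro ts
      obtain ⟨i, j, hij, c⟩ := ts
      rw [Matrix.TransvectionStruct.toMatrix_mk, det_lam2_transvection i j hij c,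
        Matrix.det_transvection_of_ne i j hij c, one_pow]
    · intro A B _ _ PA PB
      rw [lam2_mul, Matrix.det_mul, PA, PB, Matrix.det_mul, mul_pow]

end PetrovAux

/-- The Petrov matrix of a rank-4 covariant tensor `G` on `ℝ^d` with the symmetries
`G_{abcd} = G_{cdab} = -G_{bacd}`: a square matrix indexed by the ordered index pairs
`[ab]` with `a < b`, whose `([ab],[cd])` entry is `G_{abcd}`. -/
def petrovMatrix {d : ℕ} (G : Fin d → Fin d → Fin d → Fin d → ℝ) :
    Matrix {p : Fin d × Fin d // p.1 < p.2} {p : Fin d × Fin d // p.1 < p.2} ℝ :=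
  Matrix.of fun i j => G i.1.1 i.1.2 j.1.1 j.1.2

namespace PetrovAux

lemma petrov_transform {d : ℕ}
    (G : Fin d → Fin d → Fin d → Fin d → ℝ)
    (hsym : ∀ a b c e, G a b c e = G c e a b)
    (hasym : ∀ a b c e, G a b c e = - G b a c e)
    (t : Matrix (Fin d) (Fin d) ℝ) :
    petrovMatrix (fun a b c e =>
        ∑ m, ∑ n, ∑ p, ∑ q, t m a * t n b * t p c * t q e * G m n p q)
      = (lam2 t).transpose * petrovMatrix G * lam2 t := by
  classical
  have hG2 : ∀ m n p q, G m n q p = - G m n p q := by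
    intro m n p q
    conv_lhs => rw [hsym m n q p, hasym q p m n, hsym p q m n]
  have hG1 : ∀ m n p q, G n m p q = - G m n p q := fun m n p q => by
    rw [hasym n m p q]
  ext P Q
  obtain ⟨⟨a, b⟩, hab⟩ := P
  obtain ⟨⟨c, e⟩, hce⟩ := Q
  simp only [petrovMatrix, Matrix.of_apply, Matrix.mul_apply, Matrix.transpose_apply]
  -- the inner double sum, for fixed m n
  have step1 : ∀ m n : Fin d, ∑ p, ∑ q, (t p c * t q e * G m n p q)
      = ∑ R : {p : Fin d × Fin d // p.1 < p.2},
          (t R.1.1 c * t R.1.2 e - t R.1.2 c * t R.1.1 e) * G m n R.1.1 R.1.2 := by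
    intro m n
    rw [sum_antisym (fun p q => t p c * t q e * G m n p q)
      (fun p => by
        show t p c * t p e * G m n p p = 0
        have h := hG2 m n p p
        have hz : G m n p p = 0 := by linarith
        rw [hz, mul_zero])]
    refine Finset.sum_congr rfl fun R _ => ?_
    show t R.1.1 c * t R.1.2 e * G m n R.1.1 R.1.2
        + t R.1.2 c * t R.1.1 e * G m n R.1.2 R.1.1 = _
    rw [hG2 m n R.1.1 R.1.2]
    ring
  -- rewrite the quadruple sum
  have step2 : ∑ m, ∑ n, ∑ p, ∑ q, (t m a * t n b * t p c * t q e * G m n p q)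
      = ∑ m, ∑ n, (t m a * t n b *
          ∑ R : {p : Fin d × Fin d // p.1 < p.2},
            (t R.1.1 c * t R.1.2 e - t R.1.2 c * t R.1.1 e) * G m n R.1.1 R.1.2) := by
    refine Finset.sum_congr rfl fun m _ => Finset.sum_congr rfl fun n _ => ?_
    rw [← step1 m n, Finset.mul_sum]
    refine Finset.sum_congr rfl fun p _ => ?_
    rw [Finset.mul_sum]
    refine Finset.sum_congr rfl fun q _ => by ring
  rw [step2]
  have step3 : ∑ m, ∑ n, (t m a * t n b *
        ∑ R : {p : Fin d × Fin d // p.1 < p.2},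
          (t R.1.1 c * t R.1.2 e - t R.1.2 c * t R.1.1 e) * G m n R.1.1 R.1.2)
      = ∑ S : {p : Fin d × Fin d // p.1 < p.2},
          (t S.1.1 a * t S.1.2 b - t S.1.2 a * t S.1.1 b) *
          ∑ R : {p : Fin d × Fin d // p.1 < p.2},
            (t R.1.1 c * t R.1.2 e - t R.1.2 c * t R.1.1 e) * G S.1.1 S.1.2 R.1.1 R.1.2 := by
    rw [sum_antisym (fun m n => t m a * t n b *
        ∑ R : {p : Fin d × Fin d // p.1 < p.2},
          (t R.1.1 c * t R.1.2 e - t R.1.2 c * t R.1.1 e) * G m n R.1.1 R.1.2)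
      (fun m => by
        show t m a * t m b * ∑ R : {p : Fin d × Fin d // p.1 < p.2},
          (t R.1.1 c * t R.1.2 e - t R.1.2 c * t R.1.1 e) * G m m R.1.1 R.1.2 = 0
        have hz : ∑ R : {p : Fin d × Fin d // p.1 < p.2},
            (t R.1.1 c * t R.1.2 e - t R.1.2 c * t R.1.1 e) * G m m R.1.1 R.1.2 = 0 := by
          apply Finset.sum_eq_zero
          intro R _
          have h := hG1 m m R.1.1 R.1.2
          have hz0 : G m m R.1.1 R.1.2 = 0 := by linarith
          rw [hz0, mul_zero]
        rw [hz, mul_zero])]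
    refine Finset.sum_congr rfl fun S _ => ?_
    show t S.1.1 a * t S.1.2 b * (∑ R : {p : Fin d × Fin d // p.1 < p.2},
          (t R.1.1 c * t R.1.2 e - t R.1.2 c * t R.1.1 e) * G S.1.1 S.1.2 R.1.1 R.1.2)
        + t S.1.2 a * t S.1.1 b * (∑ R : {p : Fin d × Fin d // p.1 < p.2},
          (t R.1.1 c * t R.1.2 e - t R.1.2 c * t R.1.1 e) * G S.1.2 S.1.1 R.1.1 R.1.2) = _
    have hswap : ∑ R : {p : Fin d × Fin d // p.1 < p.2},
        (t R.1.1 c * t R.1.2 e - t R.1.2 c * t R.1.1 e) * G S.1.2 S.1.1 R.1.1 R.1.2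
        = - ∑ R : {p : Fin d × Fin d // p.1 < p.2},
            (t R.1.1 c * t R.1.2 e - t R.1.2 c * t R.1.1 e) * G S.1.1 S.1.2 R.1.1 R.1.2 := by
      rw [← Finset.sum_neg_distrib]
      refine Finset.sum_congr rfl fun R _ => ?_
      rw [hG1 S.1.1 S.1.2 R.1.1 R.1.2]
      ring
    rw [hswap]
    ring
  rw [step3]
  calc ∑ S : {p : Fin d × Fin d // p.1 < p.2},
        (t S.1.1 a * t S.1.2 b - t S.1.2 a * t S.1.1 b) *
        ∑ R : {p : Fin d × Fin d // p.1 < p.2},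
          (t R.1.1 c * t R.1.2 e - t R.1.2 c * t R.1.1 e) * G S.1.1 S.1.2 R.1.1 R.1.2
      = ∑ S : {p : Fin d × Fin d // p.1 < p.2}, ∑ R : {p : Fin d × Fin d // p.1 < p.2},
          (lam2 t S ⟨(a, b), hab⟩ * G S.1.1 S.1.2 R.1.1 R.1.2) * lam2 t R ⟨(c, e), hce⟩ := by
        refine Finset.sum_congr rfl fun S _ => ?_
        rw [Finset.mul_sum]
        refine Finset.sum_congr rfl fun R _ => ?_
        simp only [lam2, Matrix.of_apply]
        ring
    _ = ∑ R : {p : Fin d × Fin d // p.1 < p.2}, ∑ S : {p : Fin d × Fin d // p.1 < p.2},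
          (lam2 t S ⟨(a, b), hab⟩ * G S.1.1 S.1.2 R.1.1 R.1.2) * lam2 t R ⟨(c, e), hce⟩ :=
        Finset.sum_comm
    _ = ∑ R : {p : Fin d × Fin d // p.1 < p.2},
          (∑ S : {p : Fin d × Fin d // p.1 < p.2},
            lam2 t S ⟨(a, b), hab⟩ * G S.1.1 S.1.2 R.1.1 R.1.2) * lam2 t R ⟨(c, e), hce⟩ := by
        refine Finset.sum_congr rfl fun R _ => ?_
        rw [Finset.sum_mul]

end PetrovAux

/-- Let `d ≥ 2`, let `G` be a rank-4 covariant tensor on `ℝ^d` with the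
symmetries `G_{abcd} = G_{cdab} = -G_{bacd}`, and `t` a `d × d` real matrix.  Define
`G'_{abcd} = t^m_a t^n_b t^p_c t^q_e G_{mnpq}`.  Then
`det (Petrov G') = (det t)^(2d-2) · det (Petrov G)`. -/
theorem det_petrov_of_frame_transform
    (d : ℕ) (hd : 2 ≤ d)
    (G : Fin d → Fin d → Fin d → Fin d → ℝ)
    (hsym : ∀ a b c e, G a b c e = G c e a b)
    (hasym : ∀ a b c e, G a b c e = - G b a c e)
    (t : Matrix (Fin d) (Fin d) ℝ) :
    (petrovMatrix (fun a b c e =>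
        ∑ m, ∑ n, ∑ p, ∑ q, t m a * t n b * t p c * t q e * G m n p q)).det
      = t.det ^ (2 * d - 2) * (petrovMatrix G).det := by
  rw [PetrovAux.petrov_transform G hsym hasym t, Matrix.det_mul, Matrix.det_mul,
    Matrix.det_transpose, PetrovAux.det_lam2 hd t]
  rw [show 2 * d - 2 = (d - 1) + (d - 1) by omega, pow_add]
  ring
end

section
/- (Metaclass III has no symmetries.) Let G be the area metric on ℝ⁴ whose Petrov matrix is the metaclass III normal form with parameters σ₁ ∈ ℝ and τ₁ > 0. If ω ∈ 𝔤𝔩(4,ℝ) is an infinitesimal symmetry of G, then ω = 0. -/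
noncomputable section

/-- First members of the ordered Petrov index pairs `[01],[02],[03],[12],[31],[23]`. -/
def pFst : Fin 6 → Fin 4 := ![0, 0, 0, 1, 3, 2]

/-- Second members of the ordered Petrov index pairs `[01],[02],[03],[12],[31],[23]`. -/
def pSnd : Fin 6 → Fin 4 := ![1, 2, 3, 2, 1, 3]

/-- The Petrov matrix of a rank-4 covariant tensor on `ℝ⁴`: the symmetric `6 × 6` matrix
of components `G_{abcd}` indexed by the ordered pairs `[01],[02],[03],[12],[31],[23]`. -/
def petrov (G : Fin 4 → Fin 4 → Fin 4 → Fin 4 → ℝ) : Matrix (Fin 6) (Fin 6) ℝ :=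
  Matrix.of fun A B => G (pFst A) (pSnd A) (pFst B) (pSnd B)

/-- The totally antisymmetric Levi-Civita symbol on four indices with `ε₀₁₂₃ = 1`. -/
def eps (a b c d : Fin 4) : ℝ :=
  (Matrix.of fun i j => if (![a, b, c, d] : Fin 4 → Fin 4) i = j then (1 : ℝ) else 0).det

/-- The Petrov index associated to a pair of distinct indices (arbitrary on the diagonal). -/
def bIdx : Fin 4 → Fin 4 → Fin 6 :=
  ![![0, 0, 1, 2], ![0, 0, 3, 4], ![1, 3, 0, 5], ![2, 4, 5, 0]]

/-- The sign relating the tensor component `T_{ab}` to the Petrov component at `bIdx a b`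
(`0` on the diagonal); the pair `[31]` is stored in the order `(3,1)`. -/
def bSgn : Fin 4 → Fin 4 → ℝ :=
  ![![0, 1, 1, 1], ![-1, 0, 1, -1], ![-1, -1, 0, 1], ![-1, 1, -1, 0]]

/-- The rank-4 tensor with the area metric symmetries reconstructed from a
(symmetric) Petrov matrix. -/
def fromPetrov (M : Matrix (Fin 6) (Fin 6) ℝ) : Fin 4 → Fin 4 → Fin 4 → Fin 4 → ℝ :=
  fun a b c d => bSgn a b * bSgn c d * M (bIdx a b) (bIdx c d)

/-- The components `(G⁻¹)^{abcd}` of the inverse area metric, characterized by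
`Petrov(G⁻¹) = Petrov(G)⁻¹`. -/
def ginv (G : Fin 4 → Fin 4 → Fin 4 → Fin 4 → ℝ) : Fin 4 → Fin 4 → Fin 4 → Fin 4 → ℝ :=
  fromPetrov (petrov G)⁻¹

/-- The area metric volume form `(ω_G)_{abcd} = |det Petrov(G)|^{1/6} ε_{abcd}`. -/
def vol (G : Fin 4 → Fin 4 → Fin 4 → Fin 4 → ℝ) (a b c d : Fin 4) : ℝ :=
  |(petrov G).det| ^ ((1 : ℝ) / 6) * eps a b c d

/-- The inverse volume form `(ω_G⁻¹)^{abcd} = |det Petrov(G)|^{-1/6} ε^{abcd}`. -/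
def volInv (G : Fin 4 → Fin 4 → Fin 4 → Fin 4 → ℝ) (a b c d : Fin 4) : ℝ :=
  |(petrov G).det| ^ (-(1 : ℝ) / 6) * eps a b c d

/-- The Fresnel polynomial
`𝒢(k,k,k,k) = -(1/24)(ω_G)_{mnpq}(ω_G)_{rstu}(G⁻¹)^{mnra}(G⁻¹)^{bpsc}(G⁻¹)^{dqtu} k_a k_b k_c k_d`
(all repeated indices summed over `0,…,3`; the symmetrization over `a,b,c,d` in the Fresnel
tensor is immaterial after contraction with `k_a k_b k_c k_d`). -/
def fresnelPoly (G : Fin 4 → Fin 4 → Fin 4 → Fin 4 → ℝ) (k : Fin 4 → ℝ) : ℝ :=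
  -(1 / 24) * ∑ m : Fin 4, ∑ n : Fin 4, ∑ p : Fin 4, ∑ q : Fin 4, ∑ r : Fin 4, ∑ s : Fin 4,
      ∑ t : Fin 4, ∑ u : Fin 4, ∑ a : Fin 4, ∑ b : Fin 4, ∑ c : Fin 4, ∑ d : Fin 4,
    vol G m n p q * vol G r s t u * ginv G m n r a * ginv G b p s c * ginv G d q t u *
      k a * k b * k c * k d

/-- `ω ∈ 𝔤𝔩(4,ℝ)` is an infinitesimal symmetry of the area metric `G` if
`ω^m_a G_{mbcd} + ω^m_b G_{amcd} + ω^m_c G_{abmd} + ω^m_d G_{abcm} = 0`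
for all `a,b,c,d` (here `ω m a` denotes `ω^m_a`). -/
def IsInfSym (G : Fin 4 → Fin 4 → Fin 4 → Fin 4 → ℝ)
    (ω : Matrix (Fin 4) (Fin 4) ℝ) : Prop :=
  ∀ a b c d : Fin 4,
    (∑ m : Fin 4, ω m a * G m b c d) + (∑ m : Fin 4, ω m b * G a m c d)
      + (∑ m : Fin 4, ω m c * G a b m d) + (∑ m : Fin 4, ω m d * G a b c m) = 0

/-- The metaclass III normal form with parameters `(σ₁, τ₁)`. -/
def metaclassIII (σ₁ τ₁ : ℝ) : Fin 4 → Fin 4 → Fin 4 → Fin 4 → ℝ :=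
  fromPetrov !![0, 0, 0, 0, -τ₁, σ₁;
                0, 0, 0, 0, σ₁, τ₁;
                0, 0, -τ₁, σ₁, 0, 1;
                0, 0, σ₁, τ₁, 1, 0;
                -τ₁, σ₁, 0, 1, 0, 0;
                σ₁, τ₁, 1, 0, 0, 0]

private lemma auxConsValFive {α : Type*} {m : ℕ} (x : α) (u : Fin (m + 5) → α) :
    Matrix.vecCons x u 5 =
      Matrix.vecHead (Matrix.vecTail (Matrix.vecTail (Matrix.vecTail (Matrix.vecTail u)))) :=
  rfl

set_option maxHeartbeats 1000000 in
/-- Metaclass III area metrics have no (infinitesimal) symmetries: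
if `ω ∈ 𝔤𝔩(4,ℝ)` is an infinitesimal symmetry of the metaclass III normal form with
`τ₁ > 0`, then `ω = 0`. -/
theorem metaclass_III_no_symmetries
    (σ₁ τ₁ : ℝ) (hτ : 0 < τ₁)
    (ω : Matrix (Fin 4) (Fin 4) ℝ)
    (hω : IsInfSym (metaclassIII σ₁ τ₁) ω) :
    ω = 0 := by
  have hne : τ₁ ≠ 0 := ne_of_gt hτ
  have E1 := hω 0 1 0 1
  have E2 := hω 0 1 0 3
  have E3 := hω 0 1 1 2
  have E4 := hω 0 1 1 3
  have E5 := hω 0 1 2 3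
  have E6 := hω 0 2 1 3
  have E7 := hω 0 2 2 3
  have E8 := hω 0 3 0 3
  have E9 := hω 0 3 1 2
  have E10 := hω 0 3 1 3
  have E11 := hω 0 3 2 3
  have E12 := hω 1 2 1 2
  have E13 := hω 1 2 1 3
  have E14 := hω 1 2 2 3
  have E15 := hω 1 3 1 3
  have E16 := hω 1 3 2 3
  have E17 := hω 2 3 2 3
  simp only [metaclassIII, fromPetrov, bSgn, bIdx, Fin.sum_univ_four, Matrix.of_apply,
    Matrix.cons_val', Matrix.empty_val', Matrix.cons_val_fin_one, Matrix.cons_val_zero,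
    Matrix.cons_val_one, Matrix.cons_val_two, Matrix.cons_val_three, Matrix.cons_val_four,
    auxConsValFive, Matrix.head_cons, Matrix.tail_cons, Matrix.head_fin_const]
    at E1 E2 E3 E4 E5 E6 E7 E8 E9 E10 E11 E12 E13 E14 E15 E16 E17
  have h30 : ω 3 0 = 0 := by
    apply mul_left_cancel₀ hne
    linear_combination (-1/2 : ℝ) * E1
  have h31 : ω 3 1 = 0 := by
    apply mul_left_cancel₀ hne
    linear_combination (τ₁/6) * E5 - (τ₁/6) * E6 - (τ₁/3) * E9 - (1/2 : ℝ) * E2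
  have h10 : ω 1 0 = 0 := by
    apply mul_left_cancel₀ hne
    linear_combination E2 + τ₁ * h31
  have h20 : ω 2 0 = 0 := by
    apply mul_left_cancel₀ hne
    linear_combination (τ₁/6) * (E4 + E7 - E12 + E8) - (1/2 : ℝ) * E3 + (1/2 : ℝ) * h30
  have h32 : ω 3 2 = 0 := by
    apply mul_left_cancel₀ hne
    linear_combination E3 + τ₁ * h20 - h30
  have h11 : ω 1 1 = 0 := by
    apply mul_left_cancel₀ hne
    linear_combination (1/2 : ℝ) * E4 + (1/4 : ℝ) * E8 - h20
  have h22 : ω 2 2 = 0 := by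
    apply mul_left_cancel₀ hne
    linear_combination (1/2 : ℝ) * E7 + (1/4 : ℝ) * E8 - (1/2 : ℝ) * h32 - (1/2 : ℝ) * h20
  have hsum : ω 0 0 + ω 3 3 = 0 := by
    apply mul_left_cancel₀ hne
    linear_combination (-1/2 : ℝ) * E8 + h20
  have h33 : ω 3 3 = 0 := by
    linear_combination (1/2 : ℝ) * E11 - (1/2 : ℝ) * E13 - h11 - h22 - (1/2 : ℝ) * hsum
  have h00 : ω 0 0 = 0 := by linear_combination hsum - h33
  have h02 : ω 0 2 = 0 := by
    apply mul_left_cancel₀ hne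
    linear_combination (-1/2 : ℝ) * E13 - h11 - (1/2 : ℝ) * h22 - (1/2 : ℝ) * h33
      + (τ₁/4) * (E17 - E15)
  have h23 : ω 2 3 = 0 := by
    linear_combination (1/2 : ℝ) * E17 - (1/2 : ℝ) * E15 - h02
  have h03 : ω 0 3 = 0 := by
    apply mul_left_cancel₀ hne
    linear_combination (-1/2 : ℝ) * E15 - h23
  have h01 : ω 0 1 = 0 := by
    apply mul_left_cancel₀ (pow_ne_zero 2 hne)
    linear_combination (1/4 : ℝ) * (E5 - E9) - (1/4 : ℝ) * h10 - (1/2 : ℝ) * h31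
      - (τ₁/4) * E10 + (τ₁/4) * E14 + (τ₁^2/2) * E16
  have h13 : ω 1 3 = 0 := by linear_combination E16 - h01
  have h12 : ω 1 2 = 0 := by
    linear_combination -E14 + τ₁ * h01 - τ₁ * h13
  have h21 : ω 2 1 = 0 := by linear_combination E10 + τ₁ * h01 - τ₁ * h13
  ext i j
  fin_cases i <;> fin_cases j <;>
    simp only [Matrix.zero_apply] <;>
    first
      | exact h00 | exact h01 | exact h02 | exact h03
      | exact h10 | exact h11 | exact h12 | exact h13
      | exact h20 | exact h21 | exact h22 | exact h23
      | exact h30 | exact h31 | exact h32 | exact h33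


end
end

section
/- (Fresnel polynomial of spherically symmetric area metrics.) Let ξ, σ, τ ∈ ℝ, let ε₁, ε₂ ∈ {−1,0,1} and ε₃² ∈ {0,1}, and let G be the area metric on ℝ⁴ whose inverse has Petrov matrix Petrov(G⁻¹) = [[ξ,0,0,0,0,2σ+τ],[0,ε₂,0,0,−σ+τ,0],[0,0,ε₂,−σ+τ,0,0],[0,0,−σ+τ,ε₁,0,0],[0,−σ+τ,0,0,ε₁,0],[2σ+τ,0,0,0,0,ε₃²]], assumed invertible. Then there exists a nonzero real constant c such that for every covector k = (k₀,k₁,k₂,k₃), 𝒢(k,k,k,k) = c·(ξu² + (ε₁ε₂ + ξε₃² − 9σ²)uv + ε₁ε₂ε₃²v²), where u = ε₂k₀² + ε₁k₁² and v = k₂² + k₃². -/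
noncomputable section

def Etab : Fin 4 → Fin 4 → Fin 4 → Fin 4 → ℝ := ![![![![(0), (0), (0), (0)], ![(0), (0), (0), (0)], ![(0), (0), (0), (0)], ![(0), (0), (0), (0)]], ![![(0), (0), (0), (0)], ![(0), (0), (0), (0)], ![(0), (0), (0), (1)], ![(0), (0), (-1), (0)]], ![![(0), (0), (0), (0)], ![(0), (0), (0), (-1)], ![(0), (0), (0), (0)], ![(0), (1), (0), (0)]], ![![(0), (0), (0), (0)], ![(0), (0), (1), (0)], ![(0), (-1), (0), (0)], ![(0), (0), (0), (0)]]], ![![![(0), (0), (0), (0)], ![(0), (0), (0), (0)], ![(0), (0), (0), (-1)], ![(0), (0), (1), (0)]], ![![(0), (0), (0), (0)], ![(0), (0), (0), (0)], ![(0), (0), (0), (0)], ![(0), (0), (0), (0)]], ![![(0), (0), (0), (1)], ![(0), (0), (0), (0)], ![(0), (0), (0), (0)], ![(-1), (0), (0), (0)]], ![![(0), (0), (-1), (0)], ![(0), (0), (0), (0)], ![(1), (0), (0), (0)], ![(0), (0), (0), (0)]]], ![![![(0), (0), (0), (0)], ![(0), (0), (0), (1)], ![(0), (0), (0), (0)],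 ![(0), (-1), (0), (0)]], ![![(0), (0), (0), (-1)], ![(0), (0), (0), (0)], ![(0), (0), (0), (0)], ![(1), (0), (0), (0)]], ![![(0), (0), (0), (0)], ![(0), (0), (0), (0)], ![(0), (0), (0), (0)], ![(0), (0), (0), (0)]], ![![(0), (1), (0), (0)], ![(-1), (0), (0), (0)], ![(0), (0), (0), (0)], ![(0), (0), (0), (0)]]], ![![![(0), (0), (0), (0)], ![(0), (0), (-1), (0)], ![(0), (1), (0), (0)], ![(0), (0), (0), (0)]], ![![(0), (0), (1), (0)], ![(0), (0), (0), (0)], ![(-1), (0), (0), (0)], ![(0), (0), (0), (0)]], ![![(0), (-1), (0), (0)], ![(1), (0), (0), (0)], ![(0), (0), (0), (0)], ![(0), (0), (0), (0)]], ![![(0), (0), (0), (0)], ![(0), (0), (0), (0)], ![(0), (0), (0), (0)], ![(0), (0), (0), (0)]]]]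

def Gtab (ξ σ τ ε₁ ε₂ ε₃sq : ℝ) : Fin 4 → Fin 4 → Fin 4 → Fin 4 → ℝ := ![![![![(0), (0), (0), (0)], ![(0), (0), (0), (0)], ![(0), (0), (0), (0)], ![(0), (0), (0), (0)]], ![![(0), (ξ), (0), (0)], ![(-ξ), (0), (0), (0)], ![(0), (0), (0), (τ + 2 * σ)], ![(0), (0), (-τ - 2 * σ), (0)]], ![![(0), (0), (ε₂), (0)], ![(0), (0), (0), (-τ + σ)], ![(-ε₂), (0), (0), (0)], ![(0), (τ - σ), (0), (0)]], ![![(0), (0), (0), (ε₂)], ![(0), (0), (τ - σ), (0)], ![(0), (-τ + σ), (0), (0)], ![(-ε₂), (0), (0), (0)]]], ![![![(0), (-ξ), (0), (0)], ![(ξ), (0), (0), (0)], ![(0), (0), (0), (-τ - 2 * σ)], ![(0), (0), (τ + 2 * σ), (0)]], ![![(0), (0), (0), (0)], ![(0), (0), (0), (0)], ![(0), (0), (0), (0)], ![(0), (0), (0), (0)]], ![![(0), (0), (0), (τ - σ)], ![(0), (0), (ε₁), (0)], ![(0), (-ε₁), (0), (0)], ![(-τ + σ), (0), (0), (0)]],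 ![![(0), (0), (-τ + σ), (0)], ![(0), (0), (0), (ε₁)], ![(τ - σ), (0), (0), (0)], ![(0), (-ε₁), (0), (0)]]], ![![![(0), (0), (-ε₂), (0)], ![(0), (0), (0), (τ - σ)], ![(ε₂), (0), (0), (0)], ![(0), (-τ + σ), (0), (0)]], ![![(0), (0), (0), (-τ + σ)], ![(0), (0), (-ε₁), (0)], ![(0), (ε₁), (0), (0)], ![(τ - σ), (0), (0), (0)]], ![![(0), (0), (0), (0)], ![(0), (0), (0), (0)], ![(0), (0), (0), (0)], ![(0), (0), (0), (0)]], ![![(0), (τ + 2 * σ), (0), (0)], ![(-τ - 2 * σ), (0), (0), (0)], ![(0), (0), (0), (ε₃sq)], ![(0), (0), (-ε₃sq), (0)]]], ![![![(0), (0), (0), (-ε₂)], ![(0), (0), (-τ + σ), (0)], ![(0), (τ - σ), (0), (0)], ![(ε₂), (0), (0), (0)]], ![![(0), (0), (τ - σ), (0)], ![(0), (0), (0), (-ε₁)], ![(-τ + σ), (0), (0), (0)], ![(0), (ε₁), (0), (0)]], ![![(0), (-τ - 2 * σ), (0), (0)], ![(τ + 2 * σ), (0), (0), (0)], ![(0),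 (0), (0), (-ε₃sq)], ![(0), (0), (ε₃sq), (0)]], ![![(0), (0), (0), (0)], ![(0), (0), (0), (0)], ![(0), (0), (0), (0)], ![(0), (0), (0), (0)]]]]

def F1tab (ξ σ τ ε₁ ε₂ ε₃sq : ℝ) (k : Fin 4 → ℝ) : Fin 4 → Fin 4 → Fin 4 → ℝ := ![![![(0), (0), (0), (0)], ![(ξ * k 1), (-ξ * k 0), (τ * k 3 + 2 * σ * k 3), (-τ * k 2 - 2 * σ * k 2)], ![(ε₂ * k 2), (-τ * k 3 + σ * k 3), (-ε₂ * k 0), (τ * k 1 - σ * k 1)], ![(ε₂ * k 3), (τ * k 2 - σ * k 2), (-τ * k 1 + σ * k 1), (-ε₂ * k 0)]], ![![(-ξ * k 1), (ξ * k 0), (-τ * k 3 - 2 * σ * k 3), (τ * k 2 + 2 * σ * k 2)], ![(0), (0), (0), (0)], ![(τ * k 3 - σ * k 3), (ε₁ * k 2), (-ε₁ * k 1), (-τ * k 0 + σ * k 0)], ![(-τ * k 2 + σ * k 2), (ε₁ * k 3), (τ * k 0 - σ * k 0), (-ε₁ * k 1)]], ![![(-ε₂ * k 2), (τ * k 3 -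 σ * k 3), (ε₂ * k 0), (-τ * k 1 + σ * k 1)], ![(-τ * k 3 + σ * k 3), (-ε₁ * k 2), (ε₁ * k 1), (τ * k 0 - σ * k 0)], ![(0), (0), (0), (0)], ![(τ * k 1 + 2 * σ * k 1), (-τ * k 0 - 2 * σ * k 0), (ε₃sq * k 3), (-ε₃sq * k 2)]], ![![(-ε₂ * k 3), (-τ * k 2 + σ * k 2), (τ * k 1 - σ * k 1), (ε₂ * k 0)], ![(τ * k 2 - σ * k 2), (-ε₁ * k 3), (-τ * k 0 + σ * k 0), (ε₁ * k 1)], ![(-τ * k 1 - 2 * σ * k 1), (τ * k 0 + 2 * σ * k 0), (-ε₃sq * k 3), (ε₃sq * k 2)], ![(0), (0), (0), (0)]]]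

def F2tab (ξ σ τ ε₁ ε₂ ε₃sq : ℝ) (k : Fin 4 → ℝ) : Fin 4 → Fin 4 → ℝ := ![![(-ε₂ * k 3 * k 3 - ε₂ * k 2 * k 2 - ξ * k 1 * k 1), (ξ * k 0 * k 1), (ε₂ * k 0 * k 2 - 3 * σ * k 1 * k 3), (ε₂ * k 0 * k 3 + 3 * σ * k 1 * k 2)], ![(ξ * k 0 * k 1), (-ε₁ * k 3 * k 3 - ε₁ * k 2 * k 2 - ξ * k 0 * k 0), (ε₁ * k 1 * k 2 + 3 * σ * k 0 * k 3), (ε₁ * k 1 * k 3 - 3 * σ * k 0 * k 2)], ![(ε₂ * k 0 * k 2 - 3 * σ * k 1 * k 3), (ε₁ * k 1 * k 2 + 3 * σ * k 0 * k 3), (-ε₃sq * k 3 * k 3 - ε₂ * k 0 * k 0 - ε₁ * k 1 * k 1), (ε₃sq * k 2 * k 3)], ![(ε₂ * k 0 * k 3 + 3 * σ * k 1 * k 2), (ε₁ * k 1 * k 3 - 3 * σ * k 0 * k 2), (ε₃sq * k 2 * k 3), (-ε₃sq * k 2 * k 2 - ε₂ * k 0 * k 0 - ε₁ * k 1 * k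 1)]]

def F3tab (ξ σ τ ε₁ ε₂ ε₃sq : ℝ) (k : Fin 4 → ℝ) : Fin 4 → Fin 4 → Fin 4 → ℝ := ![![![(0), (-ξ * k 1), (-ε₂ * k 2), (-ε₂ * k 3)], ![(ξ * k 1), (0), (-τ * k 3 + σ * k 3), (τ * k 2 - σ * k 2)], ![(ε₂ * k 2), (τ * k 3 - σ * k 3), (0), (-τ * k 1 - 2 * σ * k 1)], ![(ε₂ * k 3), (-τ * k 2 + σ * k 2), (τ * k 1 + 2 * σ * k 1), (0)]], ![![(0), (ξ * k 0), (τ * k 3 - σ * k 3), (-τ * k 2 + σ * k 2)], ![(-ξ * k 0), (0), (-ε₁ * k 2), (-ε₁ * k 3)], ![(-τ * k 3 + σ * k 3), (ε₁ * k 2), (0), (τ * k 0 + 2 * σ * k 0)], ![(τ * k 2 - σ * k 2), (ε₁ * k 3), (-τ * k 0 - 2 * σ * k 0), (0)]], ![![(0), (-τ * k 3 - 2 * σ * k 3), (ε₂ * k 0), (τ * k 1 - σ * k 1)], ![(τ * k 3 + 2 * σ * k 3), (0), (ε₁ * k 1), (-τ * k 0 + σ * k 0)], ![(-ε₂ * k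 0), (-ε₁ * k 1), (0), (-ε₃sq * k 3)], ![(-τ * k 1 + σ * k 1), (τ * k 0 - σ * k 0), (ε₃sq * k 3), (0)]], ![![(0), (τ * k 2 + 2 * σ * k 2), (-τ * k 1 + σ * k 1), (ε₂ * k 0)], ![(-τ * k 2 - 2 * σ * k 2), (0), (τ * k 0 - σ * k 0), (ε₁ * k 1)], ![(τ * k 1 - σ * k 1), (-τ * k 0 + σ * k 0), (0), (ε₃sq * k 2)], ![(-ε₂ * k 0), (-ε₁ * k 1), (-ε₃sq * k 2), (0)]]]

def Htab (ξ σ τ ε₁ ε₂ ε₃sq : ℝ) (k : Fin 4 → ℝ) : Fin 4 → Fin 4 → Fin 4 → ℝ := ![![![(0), (0), (0), (0)], ![(-2 * τ * k 1 - 4 * σ * k 1), (2 * τ * k 0 + 4 * σ * k 0), (-2 * ε₃sq * k 3), (2 * ε₃sq * k 2)], ![(-2 * τ * k 2 + 2 * σ * k 2), (2 * ε₁ * k 3), (2 * τ * k 0 - 2 * σ * k 0), (-2 * ε₁ * k 1)], ![(-2 * τ * k 3 + 2 * σ * k 3), (-2 * ε₁ * k 2), (2 * ε₁ * k 1), (2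 * τ * k 0 - 2 * σ * k 0)]], ![![(2 * τ * k 1 + 4 * σ * k 1), (-2 * τ * k 0 - 4 * σ * k 0), (2 * ε₃sq * k 3), (-2 * ε₃sq * k 2)], ![(0), (0), (0), (0)], ![(-2 * ε₂ * k 3), (-2 * τ * k 2 + 2 * σ * k 2), (2 * τ * k 1 - 2 * σ * k 1), (2 * ε₂ * k 0)], ![(2 * ε₂ * k 2), (-2 * τ * k 3 + 2 * σ * k 3), (-2 * ε₂ * k 0), (2 * τ * k 1 - 2 * σ * k 1)]], ![![(2 * τ * k 2 - 2 * σ * k 2), (-2 * ε₁ * k 3), (-2 * τ * k 0 + 2 * σ * k 0), (2 * ε₁ * k 1)], ![(2 * ε₂ * k 3), (2 * τ * k 2 - 2 * σ * k 2), (-2 * τ * k 1 + 2 * σ * k 1), (-2 * ε₂ * k 0)], ![(0), (0), (0), (0)], ![(-2 * ξ * k 1), (2 * ξ * k 0), (-2 * τ * k 3 - 4 * σ * k 3), (2 * τ * k 2 + 4 * σ * k 2)]], ![![(2 * τ * k 3 - 2 * σ * k 3), (2 * ε₁ * k 2), (-2 * ε₁ * k 1), (-2 * τ * k 0 + 2 *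 σ * k 0)], ![(-2 * ε₂ * k 2), (2 * τ * k 3 - 2 * σ * k 3), (2 * ε₂ * k 0), (-2 * τ * k 1 + 2 * σ * k 1)], ![(2 * ξ * k 1), (-2 * ξ * k 0), (2 * τ * k 3 + 4 * σ * k 3), (-2 * τ * k 2 - 4 * σ * k 2)], ![(0), (0), (0), (0)]]]

set_option linter.unusedVariables false
set_option linter.unnecessarySeqFocus false

theorem fin4 {P : Fin 4 → Prop} (h0 : P 0) (h1 : P 1) (h2 : P 2) (h3 : P 3) : ∀ i, P i := by
  intro i
  match i with
  | 0 => exact h0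
  | 1 => exact h1
  | 2 => exact h2
  | 3 => exact h3

theorem cv4_0 {α : Type*} (a b c d : α) : ![a,b,c,d] 0 = a := rfl
theorem cv4_1 {α : Type*} (a b c d : α) : ![a,b,c,d] 1 = b := rfl
theorem cv4_2 {α : Type*} (a b c d : α) : ![a,b,c,d] 2 = c := rfl
theorem cv4_3 {α : Type*} (a b c d : α) : ![a,b,c,d] 3 = d := rfl
theorem cv6_0 {α : Type*} (a b c d e f : α) : ![a,b,c,d,e,f] 0 = a := rfl
theorem cv6_1 {α : Type*} (a b c d e f : α) : ![a,b,c,d,e,f] 1 = b := rfl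
theorem cv6_2 {α : Type*} (a b c d e f : α) : ![a,b,c,d,e,f] 2 = c := rfl
theorem cv6_3 {α : Type*} (a b c d e f : α) : ![a,b,c,d,e,f] 3 = d := rfl
theorem cv6_4 {α : Type*} (a b c d e f : α) : ![a,b,c,d,e,f] 4 = e := rfl
theorem cv6_5 {α : Type*} (a b c d e f : α) : ![a,b,c,d,e,f] 5 = f := rfl

theorem detfour (M : Matrix (Fin 4) (Fin 4) ℝ) : M.det =
    M 0 0 * (M 1 1 * (M 2 2 * M 3 3 - M 2 3 * M 3 2) - M 1 2 * (M 2 1 * M 3 3 - M 2 3 * M 3 1) + M 1 3 * (M 2 1 * M 3 2 - M 2 2 * M 3 1))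
  - M 0 1 * (M 1 0 * (M 2 2 * M 3 3 - M 2 3 * M 3 2) - M 1 2 * (M 2 0 * M 3 3 - M 2 3 * M 3 0) + M 1 3 * (M 2 0 * M 3 2 - M 2 2 * M 3 0))
  + M 0 2 * (M 1 0 * (M 2 1 * M 3 3 - M 2 3 * M 3 1) - M 1 1 * (M 2 0 * M 3 3 - M 2 3 * M 3 0) + M 1 3 * (M 2 0 * M 3 1 - M 2 1 * M 3 0))
  - M 0 3 * (M 1 0 * (M 2 1 * M 3 2 - M 2 2 * M 3 1) - M 1 1 * (M 2 0 * M 3 2 - M 2 2 * M 3 0) + M 1 2 * (M 2 0 * M 3 1 - M 2 1 * M 3 0)) := by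
  rw [Matrix.det_succ_row_zero]
  simp [Fin.sum_univ_succ, Matrix.det_fin_three, Fin.succAbove,
    show (Fin.succ 2 : Fin 4) = 3 from rfl, show (Fin.castSucc (2 : Fin 3) : Fin 4) = 2 from rfl]
  ring

set_option maxHeartbeats 4000000 in
theorem heps : ∀ a b c d : Fin 4, eps a b c d = Etab a b c d := by
  refine fin4 ?_ ?_ ?_ ?_ <;> refine fin4 ?_ ?_ ?_ ?_ <;> refine fin4 ?_ ?_ ?_ ?_ <;>
    refine fin4 ?_ ?_ ?_ ?_ <;>
    (simp only [Etab, cv4_0, cv4_1, cv4_2, cv4_3];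
     simp (config := { decide := true }) [eps, detfour])

set_option maxHeartbeats 4000000 in
theorem hGt (ξ σ τ ε₁ ε₂ ε₃sq : ℝ) : ∀ a b c d : Fin 4,
    fromPetrov !![ξ, 0, 0, 0, 0, 2*σ + τ;
                 0, ε₂, 0, 0, -σ + τ, 0;
                 0, 0, ε₂, -σ + τ, 0, 0;
                 0, 0, -σ + τ, ε₁, 0, 0;
                 0, -σ + τ, 0, 0, ε₁, 0;
                 2*σ + τ, 0, 0, 0, 0, ε₃sq] a b c d
      = Gtab ξ σ τ ε₁ ε₂ ε₃sq a b c d := by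
  refine fin4 ?_ ?_ ?_ ?_ <;> refine fin4 ?_ ?_ ?_ ?_ <;> refine fin4 ?_ ?_ ?_ ?_ <;>
    refine fin4 ?_ ?_ ?_ ?_ <;>
    (simp only [fromPetrov, bSgn, bIdx, Gtab, Matrix.of_apply,
      cv4_0, cv4_1, cv4_2, cv4_3, cv6_0, cv6_1, cv6_2, cv6_3, cv6_4, cv6_5] <;> ring)

set_option maxHeartbeats 4000000 in
theorem hF1 (ξ σ τ ε₁ ε₂ ε₃sq : ℝ) (k : Fin 4 → ℝ) : ∀ m n r : Fin 4,
    (∑ a : Fin 4, Gtab ξ σ τ ε₁ ε₂ ε₃sq m n r a * k a) = F1tab ξ σ τ ε₁ ε₂ ε₃sq k m n r := by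
  refine fin4 ?_ ?_ ?_ ?_ <;> refine fin4 ?_ ?_ ?_ ?_ <;> refine fin4 ?_ ?_ ?_ ?_ <;>
    (simp only [Fin.sum_univ_four, Gtab, F1tab,
      cv4_0, cv4_1, cv4_2, cv4_3] <;> ring)

set_option maxHeartbeats 4000000 in
theorem hF2 (ξ σ τ ε₁ ε₂ ε₃sq : ℝ) (k : Fin 4 → ℝ) : ∀ p s : Fin 4,
    (∑ b : Fin 4, ∑ c : Fin 4, Gtab ξ σ τ ε₁ ε₂ ε₃sq b p s c * k b * k c)
      = F2tab ξ σ τ ε₁ ε₂ ε₃sq k p s := by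
  refine fin4 ?_ ?_ ?_ ?_ <;> refine fin4 ?_ ?_ ?_ ?_ <;>
    (simp only [Fin.sum_univ_four, Gtab, F2tab,
      cv4_0, cv4_1, cv4_2, cv4_3] <;> ring)

set_option maxHeartbeats 4000000 in
theorem hF3 (ξ σ τ ε₁ ε₂ ε₃sq : ℝ) (k : Fin 4 → ℝ) : ∀ q t u : Fin 4,
    (∑ d : Fin 4, Gtab ξ σ τ ε₁ ε₂ ε₃sq d q t u * k d) = F3tab ξ σ τ ε₁ ε₂ ε₃sq k q t u := by
  refine fin4 ?_ ?_ ?_ ?_ <;> refine fin4 ?_ ?_ ?_ ?_ <;> refine fin4 ?_ ?_ ?_ ?_ <;>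
    (simp only [Fin.sum_univ_four, Gtab, F3tab,
      cv4_0, cv4_1, cv4_2, cv4_3] <;> ring)

set_option maxHeartbeats 4000000 in
theorem hH (ξ σ τ ε₁ ε₂ ε₃sq : ℝ) (k : Fin 4 → ℝ) : ∀ r s q : Fin 4,
    (∑ t : Fin 4, ∑ u : Fin 4, Etab r s t u * F3tab ξ σ τ ε₁ ε₂ ε₃sq k q t u)
      = Htab ξ σ τ ε₁ ε₂ ε₃sq k r s q := by
  refine fin4 ?_ ?_ ?_ ?_ <;> refine fin4 ?_ ?_ ?_ ?_ <;> refine fin4 ?_ ?_ ?_ ?_ <;>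
    (simp only [Fin.sum_univ_four, Etab, F3tab, Htab,
      cv4_0, cv4_1, cv4_2, cv4_3] <;> ring)

theorem factorize (K : ℝ) (g1 : Fin 4 → ℝ) (g2 : Fin 4 → Fin 4 → ℝ) (g3 : Fin 4 → ℝ)
    (k : Fin 4 → ℝ) :
    (∑ a : Fin 4, ∑ b : Fin 4, ∑ c : Fin 4, ∑ d : Fin 4,
        K * g1 a * g2 b c * g3 d * k a * k b * k c * k d)
      = K * (∑ a : Fin 4, g1 a * k a) * (∑ b : Fin 4, ∑ c : Fin 4, g2 b c * k b * k c)
          * (∑ d : Fin 4, g3 d * k d) := by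
  simp only [Fin.sum_univ_four]
  ring

theorem fac2 (E : ℝ) (Ef : Fin 4 → Fin 4 → Fin 4 → Fin 4 → ℝ) (f1 f2 : Fin 4 → ℝ)
    (f3 : Fin 4 → Fin 4 → ℝ) :
    (∑ r : Fin 4, ∑ s : Fin 4, ∑ t : Fin 4, ∑ u : Fin 4,
        E * Ef r s t u * f1 r * f2 s * f3 t u)
      = ∑ r : Fin 4, ∑ s : Fin 4, E * f1 r * f2 s
          * (∑ t : Fin 4, ∑ u : Fin 4, Ef r s t u * f3 t u) := by
  simp only [Fin.sum_univ_four]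
  ring

set_option maxHeartbeats 8000000 in
theorem hTlem (ξ σ τ ε₁ ε₂ ε₃sq : ℝ) (k : Fin 4 → ℝ) :
    (∑ m : Fin 4, ∑ n : Fin 4, ∑ p : Fin 4, ∑ q : Fin 4, ∑ r : Fin 4, ∑ s : Fin 4,
        Etab m n p q * F1tab ξ σ τ ε₁ ε₂ ε₃sq k m n r * F2tab ξ σ τ ε₁ ε₂ ε₃sq k p s
          * Htab ξ σ τ ε₁ ε₂ ε₃sq k r s q)
      = 24 * (ξ * (ε₂ * (k 0)^2 + ε₁ * (k 1)^2)^2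
            + (ε₁ * ε₂ + ξ * ε₃sq - 9 * σ^2)
                * (ε₂ * (k 0)^2 + ε₁ * (k 1)^2) * ((k 2)^2 + (k 3)^2)
            + ε₁ * ε₂ * ε₃sq * ((k 2)^2 + (k 3)^2)^2) := by
  simp only [Fin.sum_univ_four, Etab, F1tab, F2tab, Htab,
    cv4_0, cv4_1, cv4_2, cv4_3, zero_mul, mul_zero, add_zero, zero_add, one_mul, neg_mul,
    neg_neg]
  ring


set_option maxHeartbeats 4000000 in
/-- (Fresnel polynomial of spherically symmetric area metrics.)  Let `G`
be the area metric on `ℝ⁴` whose inverse has the displayed spherically symmetric Petrov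
matrix `P` (assumed invertible), with `ε₁, ε₂ ∈ {-1,0,1}` and `ε₃² ∈ {0,1}`.  Then for a
nonzero constant `c`,
`𝒢(k,k,k,k) = c (ξ u² + (ε₁ε₂ + ξ ε₃² - 9σ²) u v + ε₁ε₂ε₃² v²)`,
where `u = ε₂k₀² + ε₁k₁²` and `v = k₂² + k₃²`. -/
theorem fresnel_of_spherically_symmetric
    (ξ σ τ ε₁ ε₂ ε₃sq : ℝ)
    (hε₁ : ε₁ = -1 ∨ ε₁ = 0 ∨ ε₁ = 1)
    (hε₂ : ε₂ = -1 ∨ ε₂ = 0 ∨ ε₂ = 1)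
    (hε₃ : ε₃sq = 0 ∨ ε₃sq = 1)
    (P : Matrix (Fin 6) (Fin 6) ℝ)
    (hP : P = !![ξ, 0, 0, 0, 0, 2*σ + τ;
                 0, ε₂, 0, 0, -σ + τ, 0;
                 0, 0, ε₂, -σ + τ, 0, 0;
                 0, 0, -σ + τ, ε₁, 0, 0;
                 0, -σ + τ, 0, 0, ε₁, 0;
                 2*σ + τ, 0, 0, 0, 0, ε₃sq])
    (hPinv : IsUnit P.det)
    (G : Fin 4 → Fin 4 → Fin 4 → Fin 4 → ℝ)
    (hsym : ∀ a b c d, G a b c d = G c d a b)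
    (hasym : ∀ a b c d, G a b c d = - G b a c d)
    (hGP : petrov G = P⁻¹) :
    ∃ c : ℝ, c ≠ 0 ∧ ∀ k : Fin 4 → ℝ,
      fresnelPoly G k
        = c * (ξ * (ε₂ * (k 0)^2 + ε₁ * (k 1)^2)^2
            + (ε₁ * ε₂ + ξ * ε₃sq - 9 * σ^2)
                * (ε₂ * (k 0)^2 + ε₁ * (k 1)^2) * ((k 2)^2 + (k 3)^2)
            + ε₁ * ε₂ * ε₃sq * ((k 2)^2 + (k 3)^2)^2) := by
  have hPGinv : (petrov G)⁻¹ = P := by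
    rw [hGP]; exact Matrix.nonsing_inv_nonsing_inv P hPinv
  have hdet : (petrov G).det ≠ 0 := by
    rw [hGP]
    exact (Matrix.isUnit_nonsing_inv_det P hPinv).ne_zero
  have hwpos : (0:ℝ) < |(petrov G).det| ^ ((1:ℝ)/6) :=
    Real.rpow_pos_of_pos (abs_pos.mpr hdet) _
  refine ⟨-(|(petrov G).det| ^ ((1:ℝ)/6) * |(petrov G).det| ^ ((1:ℝ)/6)),
    neg_ne_zero.mpr (mul_pos hwpos hwpos).ne', ?_⟩
  intro k
  have hg : ∀ a b c d : Fin 4, ginv G a b c d = Gtab ξ σ τ ε₁ ε₂ ε₃sq a b c d := by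
    intro a b c d
    show fromPetrov (petrov G)⁻¹ a b c d = _
    rw [hPGinv, hP]
    exact hGt ξ σ τ ε₁ ε₂ ε₃sq a b c d
  have hvol : ∀ a b c d : Fin 4,
      vol G a b c d = |(petrov G).det| ^ ((1:ℝ)/6) * Etab a b c d := by
    intro a b c d
    show |(petrov G).det| ^ ((1:ℝ)/6) * eps a b c d = _
    rw [heps]
  have hfacK : ∀ m n p q r s t u : Fin 4,
      (∑ a : Fin 4, ∑ b : Fin 4, ∑ c : Fin 4, ∑ d : Fin 4,
        |(petrov G).det| ^ ((1:ℝ)/6) * Etab m n p q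
          * (|(petrov G).det| ^ ((1:ℝ)/6) * Etab r s t u)
          * Gtab ξ σ τ ε₁ ε₂ ε₃sq m n r a * Gtab ξ σ τ ε₁ ε₂ ε₃sq b p s c
          * Gtab ξ σ τ ε₁ ε₂ ε₃sq d q t u * k a * k b * k c * k d)
      = |(petrov G).det| ^ ((1:ℝ)/6) * |(petrov G).det| ^ ((1:ℝ)/6)
          * (Etab m n p q * Etab r s t u * F1tab ξ σ τ ε₁ ε₂ ε₃sq k m n r
             * F2tab ξ σ τ ε₁ ε₂ ε₃sq k p s * F3tab ξ σ τ ε₁ ε₂ ε₃sq k q t u) := by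
    intro m n p q r s t u
    refine (factorize
      (|(petrov G).det| ^ ((1:ℝ)/6) * Etab m n p q
        * (|(petrov G).det| ^ ((1:ℝ)/6) * Etab r s t u))
      (fun a => Gtab ξ σ τ ε₁ ε₂ ε₃sq m n r a)
      (fun b c => Gtab ξ σ τ ε₁ ε₂ ε₃sq b p s c)
      (fun d => Gtab ξ σ τ ε₁ ε₂ ε₃sq d q t u) k).trans ?_
    simp only [hF1 ξ σ τ ε₁ ε₂ ε₃sq k, hF2 ξ σ τ ε₁ ε₂ ε₃sq k, hF3 ξ σ τ ε₁ ε₂ ε₃sq k]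
    ring
  have hfac2K : ∀ m n p q : Fin 4,
      (∑ r : Fin 4, ∑ s : Fin 4, ∑ t : Fin 4, ∑ u : Fin 4,
        Etab m n p q * Etab r s t u * F1tab ξ σ τ ε₁ ε₂ ε₃sq k m n r
          * F2tab ξ σ τ ε₁ ε₂ ε₃sq k p s * F3tab ξ σ τ ε₁ ε₂ ε₃sq k q t u)
      = ∑ r : Fin 4, ∑ s : Fin 4,
          Etab m n p q * F1tab ξ σ τ ε₁ ε₂ ε₃sq k m n r * F2tab ξ σ τ ε₁ ε₂ ε₃sq k p s
            * Htab ξ σ τ ε₁ ε₂ ε₃sq k r s q := by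
    intro m n p q
    refine (fac2 (Etab m n p q) Etab
      (fun r => F1tab ξ σ τ ε₁ ε₂ ε₃sq k m n r)
      (fun s => F2tab ξ σ τ ε₁ ε₂ ε₃sq k p s)
      (fun t u => F3tab ξ σ τ ε₁ ε₂ ε₃sq k q t u)).trans ?_
    simp only [hH ξ σ τ ε₁ ε₂ ε₃sq k]
  simp (config := { maxSteps := 10000000 }) only [fresnelPoly, hvol, hg]
  simp (config := { maxSteps := 10000000 }) only [hfacK]
  simp (config := { maxSteps := 10000000 }) only [← Finset.mul_sum]
  simp (config := { maxSteps := 10000000 }) only [hfac2K]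
  rw [hTlem ξ σ τ ε₁ ε₂ ε₃sq k]
  ring
end
end
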